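/- Let Q_1,...,Q_N ∈ ℝ^{d×d} be symmetric positive definite and pairwise commuting, M_i = (∑_{k≠i} Q_k) Q_i^{-1}, and q_{M_i}(x) = (1/2)⟨x, M_i x⟩. Then ∑_{1≤i<j≤N} ⟨x_i, x_j⟩ ≤ ∑_{i=1}^N q_{M_i}(x_i) for all (x_1,...,x_N) ∈ (ℝ^d)^N, with equality if and only if there exists v ∈ ℝ^d with x_i = Q_i v for all i. -/

import Mathlib

open scoped BigOperators
open Matrix Polynomial

section helpers

variable {d : ℕ}

private def conjAH (U V : Matrix (Fin d) (Fin d) ℝ) (hUV : U * V = 1) (hVU : V * U = 1) :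
    Matrix (Fin d) (Fin d) ℝ →ₐ[ℝ] Matrix (Fin d) (Fin d) ℝ where
  toFun M := U * M * V
  map_one' := by show U * 1 * V = 1; rw [mul_one, hUV]
  map_mul' A B := by
    show U * (A * B) * V = (U * A * V) * (U * B * V)
    calc U * (A * B) * V = U * A * (V * U) * B * V := by rw [hVU]; noncomm_ring
    _ = (U * A * V) * (U * B * V) := by noncomm_ring
  map_zero' := by simp
  map_add' A B := by
    show U * (A + B) * V = U * A * V + U * B * V
    noncomm_ring
  commutes' r := by
    show U * (algebraMap ℝ _ r) * V = algebraMap ℝ _ r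
    simp only [Algebra.algebraMap_eq_smul_one]
    rw [mul_smul_comm, mul_one, smul_mul_assoc, hUV]

private noncomputable def psdSqrt {A : Matrix (Fin d) (Fin d) ℝ} (hA : A.PosSemidef) :
    Matrix (Fin d) (Fin d) ℝ :=
  (hA.1.eigenvectorUnitary : Matrix (Fin d) (Fin d) ℝ) * Matrix.diagonal (Real.sqrt ∘ hA.1.eigenvalues) *
    star (hA.1.eigenvectorUnitary : Matrix (Fin d) (Fin d) ℝ)

private lemma psdSqrt_mul_self {A : Matrix (Fin d) (Fin d) ℝ} (hA : A.PosSemidef) :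
    psdSqrt hA * psdSqrt hA = A := by
  have hVU : star (hA.1.eigenvectorUnitary : Matrix (Fin d) (Fin d) ℝ) *
      (hA.1.eigenvectorUnitary : Matrix (Fin d) (Fin d) ℝ) = 1 :=
    Matrix.mem_unitaryGroup_iff'.mp hA.1.eigenvectorUnitary.2
  have hdd : Matrix.diagonal (Real.sqrt ∘ hA.1.eigenvalues) *
      Matrix.diagonal (Real.sqrt ∘ hA.1.eigenvalues) = Matrix.diagonal hA.1.eigenvalues := by
    rw [Matrix.diagonal_mul_diagonal]; congr 1; funext i
    simp [Real.mul_self_sqrt (Matrix.PosSemidef.eigenvalues_nonneg hA i)]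
  have hspec := hA.1.spectral_theorem
  unfold psdSqrt
  rw [show ∀ U D V : Matrix (Fin d) (Fin d) ℝ, U * D * V * (U * D * V) = U * (D * (V * U) * D) * V
    from fun U D V => by noncomm_ring, hVU, mul_one, hdd]
  simpa [RCLike.ofReal_real_eq_id] using hspec.symm

private lemma psdSqrt_transpose {A : Matrix (Fin d) (Fin d) ℝ} (hA : A.PosSemidef) :
    (psdSqrt hA)ᵀ = psdSqrt hA := by
  simp [psdSqrt, Matrix.transpose_mul, Matrix.star_eq_conjTranspose,
    Matrix.conjTranspose_eq_transpose_of_trivial, mul_assoc]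

private lemma exists_poly_sqrt {A : Matrix (Fin d) (Fin d) ℝ} (hA : A.PosSemidef) :
    ∃ p : ℝ[X], aeval A p = psdSqrt hA := by
  classical
  set ev := hA.1.eigenvalues with hev
  set s : Finset ℝ := Finset.image ev Finset.univ with hs
  refine ⟨Lagrange.interpolate s id Real.sqrt, ?_⟩
  set p := Lagrange.interpolate s id Real.sqrt with hp
  set U : Matrix (Fin d) (Fin d) ℝ := (hA.1.eigenvectorUnitary : Matrix (Fin d) (Fin d) ℝ) with hU
  have hUV : U * star U = 1 := Matrix.mem_unitaryGroup_iff.mp hA.1.eigenvectorUnitary.2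
  have hVU : star U * U = 1 := Matrix.mem_unitaryGroup_iff'.mp hA.1.eigenvectorUnitary.2
  set φ := conjAH U (star U) hUV hVU with hφ
  have hAeq : A = φ (Matrix.diagonal ev) := by
    have := hA.1.spectral_theorem
    simpa [hφ, conjAH, RCLike.ofReal_real_eq_id] using this
  have hsqrt : psdSqrt hA = φ (Matrix.diagonal (Real.sqrt ∘ ev)) := by
    simp [psdSqrt, hφ, conjAH, RCLike.ofReal_real_eq_id, hU, hev,
      Function.comp_def]
  have hdiag : Matrix.diagonal ev = Matrix.diagonalAlgHom ℝ ev := rfl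
  calc aeval A p = aeval (φ (Matrix.diagonal ev)) p := by rw [← hAeq]
  _ = φ (aeval (Matrix.diagonal ev) p) := Polynomial.aeval_algHom_apply φ _ p
  _ = φ (Matrix.diagonal (Real.sqrt ∘ ev)) := by
      congr 1
      rw [hdiag, Polynomial.aeval_algHom_apply]
      show Matrix.diagonal (aeval ev p) = Matrix.diagonal (Real.sqrt ∘ ev)
      have hfun : (aeval ev p : Fin d → ℝ) = Real.sqrt ∘ ev := by
        funext i
        have h1 : (aeval ev p : Fin d → ℝ) i = aeval (ev i) p :=
          (Polynomial.aeval_algHom_apply (Pi.evalAlgHom ℝ (fun _ => ℝ) i) ev p).symm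
        rw [h1]
        have hnode : ev i ∈ s := Finset.mem_image_of_mem ev (Finset.mem_univ i)
        have h2 := Lagrange.eval_interpolate_at_node (s := s) (v := id) Real.sqrt
          (Set.injOn_id _) hnode
        rw [hp]
        simpa [Polynomial.aeval_def, Polynomial.eval₂_eq_eval_map, Polynomial.eval_finset_sum] using h2
      rw [hfun]
  _ = psdSqrt hA := hsqrt.symm

private lemma commute_sqrt {A B : Matrix (Fin d) (Fin d) ℝ} (hA : A.PosSemidef)
    (h : Commute B A) : Commute B (psdSqrt hA) := by
  obtain ⟨p, hp⟩ := exists_poly_sqrt hA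
  rw [← hp]
  exact Algebra.commute_of_mem_adjoin_singleton_of_commute
    (Polynomial.aeval_mem_adjoin_singleton ℝ A) h

private lemma symm_dot {S : Matrix (Fin d) (Fin d) ℝ} (hS : Sᵀ = S) (a b : Fin d → ℝ) :
    a ⬝ᵥ S *ᵥ b = (S *ᵥ a) ⬝ᵥ b := by
  rw [Matrix.dotProduct_mulVec, ← Matrix.vecMul_transpose, hS]

private lemma key_quad {A B : Matrix (Fin d) (Fin d) ℝ} (hA : A.PosDef) (hB : B.PosDef)
    (hAB : Commute A B) (w : Fin d → ℝ) :
    0 ≤ w ⬝ᵥ (A * B) *ᵥ w ∧ (w ⬝ᵥ (A * B) *ᵥ w = 0 → w = 0) := by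
  classical
  set S := psdSqrt hB.posSemidef with hSdef
  have hS2 : S * S = B := psdSqrt_mul_self hB.posSemidef
  have hSsymm : Sᵀ = S := by
    exact psdSqrt_transpose hB.posSemidef
  have hASc : Commute A S := commute_sqrt hB.posSemidef hAB
  have hfactor : A * B = S * (A * S) := by
    calc A * B = A * (S * S) := by rw [hS2]
    _ = (A * S) * S := by rw [mul_assoc]
    _ = (S * A) * S := by rw [hASc.eq]
    _ = S * (A * S) := by rw [mul_assoc]
  have hform : w ⬝ᵥ (A * B) *ᵥ w = (S *ᵥ w) ⬝ᵥ A *ᵥ (S *ᵥ w) := by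
    rw [hfactor, ← Matrix.mulVec_mulVec, symm_dot hSsymm, Matrix.mulVec_mulVec,
      ← Matrix.mulVec_mulVec]
  constructor
  · rw [hform]
    simpa using Matrix.PosSemidef.dotProduct_mulVec_nonneg hA.posSemidef (S *ᵥ w)
  · intro h0
    by_contra hw
    have hSw : S *ᵥ w ≠ 0 := by
      intro hz
      apply hw
      have hBw : B *ᵥ w = 0 := by
        rw [← hS2, ← Matrix.mulVec_mulVec, hz, Matrix.mulVec_zero]
      by_contra hw0
      have := Matrix.PosDef.dotProduct_mulVec_pos hB hw0
      simp [hBw] at this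
    have hpos' := Matrix.PosDef.dotProduct_mulVec_pos hA hSw
    rw [star_trivial] at hpos'
    rw [hform] at h0
    rw [h0] at hpos'
    exact lt_irrefl 0 hpos'

private lemma sum_mulVec' {N : ℕ} (Q : Fin N → Matrix (Fin d) (Fin d) ℝ)
    (s : Finset (Fin N)) (u : Fin d → ℝ) :
    (∑ k ∈ s, Q k) *ᵥ u = ∑ k ∈ s, Q k *ᵥ u := by
  classical
  induction s using Finset.induction with
  | empty => simp
  | insert _ _ h ih => rw [Finset.sum_insert h, Finset.sum_insert h, Matrix.add_mulVec, ih]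

private lemma dot_sum' {N : ℕ} (a : Fin d → ℝ) (s : Finset (Fin N)) (w : Fin N → Fin d → ℝ) :
    a ⬝ᵥ (∑ k ∈ s, w k) = ∑ k ∈ s, a ⬝ᵥ w k := by
  classical
  induction s using Finset.induction with
  | empty => simp
  | insert _ _ h ih => rw [Finset.sum_insert h, Finset.sum_insert h, dotProduct_add, ih]

end helpers

theorem quadratic_splitting_for_commuting_posdef
    {d N : ℕ} (hN : 2 ≤ N) (Q : Fin N → Matrix (Fin d) (Fin d) ℝ)
    (hsymm : ∀ i, (Q i).IsSymm) (hpos : ∀ i, (Q i).PosDef)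
    (hcomm : ∀ i j, Q i * Q j = Q j * Q i)
    (M : Fin N → Matrix (Fin d) (Fin d) ℝ)
    (hM : ∀ i, M i = (∑ k ∈ Finset.univ.erase i, Q k) * (Q i)⁻¹)
    (x : Fin N → Fin d → ℝ) :
    (∑ i, ∑ j ∈ Finset.Ioi i, x i ⬝ᵥ x j) ≤
        ∑ i, (1/2 : ℝ) * (x i ⬝ᵥ (M i).mulVec (x i)) ∧
      ((∑ i, ∑ j ∈ Finset.Ioi i, x i ⬝ᵥ x j) =
          ∑ i, (1/2 : ℝ) * (x i ⬝ᵥ (M i).mulVec (x i)) ↔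
        ∃ v : Fin d → ℝ, ∀ i, x i = (Q i).mulVec v) := by
  classical
  have hNpos : 0 < N := by omega
  set v : Fin N → Fin d → ℝ := fun i => (Q i)⁻¹ *ᵥ x i with hv
  have hdet : ∀ i, IsUnit (Q i).det := fun i => (isUnit_iff_ne_zero).2 (hpos i).det_pos.ne'
  have hinv : ∀ i, Q i * (Q i)⁻¹ = 1 := fun i => Matrix.mul_nonsing_inv _ (hdet i)
  have hinv' : ∀ i, (Q i)⁻¹ * Q i = 1 := fun i => Matrix.nonsing_inv_mul _ (hdet i)
  have hx : ∀ i, x i = Q i *ᵥ v i := by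
    intro i
    rw [hv]
    simp only [Matrix.mulVec_mulVec, hinv i, Matrix.one_mulVec]
  have hQsymm : ∀ i, (Q i)ᵀ = Q i := fun i => hsymm i
  have hPsymm : ∀ i j, (Q i * Q j)ᵀ = Q i * Q j := by
    intro i j
    rw [Matrix.transpose_mul, hQsymm, hQsymm, hcomm]
  have hcross : ∀ i j, x i ⬝ᵥ x j = v i ⬝ᵥ (Q i * Q j) *ᵥ v j := by
    intro i j
    rw [hx i, hx j, ← symm_dot (hQsymm i) (v i), Matrix.mulVec_mulVec]
  set g : Fin N → Fin N → ℝ := fun i k => v i ⬝ᵥ (Q i * Q k) *ᵥ v i with hg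
  set e : Fin N → Fin N → ℝ :=
    fun i j => (v i - v j) ⬝ᵥ (Q i * Q j) *ᵥ (v i - v j) with he
  -- quadratic term expansion
  have hquad : ∀ i, x i ⬝ᵥ (M i) *ᵥ x i = ∑ k ∈ Finset.univ.erase i, g i k := by
    intro i
    have h1 : (M i) *ᵥ x i = ∑ k ∈ Finset.univ.erase i, Q k *ᵥ v i := by
      rw [hM i, ← Matrix.mulVec_mulVec]
      rw [show (Q i)⁻¹ *ᵥ x i = v i from rfl, sum_mulVec']
    rw [h1, dot_sum']
    refine Finset.sum_congr rfl fun k _ => ?_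
    rw [hg]
    rw [hx i, ← symm_dot (hQsymm i) (v i), Matrix.mulVec_mulVec]
  -- step A: double sum over erase = sum over pairs
  have stepA : ∑ i, ∑ k ∈ Finset.univ.erase i, g i k
      = ∑ i, ∑ j ∈ Finset.Ioi i, (g i j + g j i) := by
    have herase : ∀ i : Fin N, Finset.univ.erase i = Finset.Ioi i ∪ Finset.Iio i := by
      intro i
      ext k
      simp only [Finset.mem_erase, Finset.mem_univ, and_true, Finset.mem_union,
        Finset.mem_Ioi, Finset.mem_Iio]
      constructor
      · intro hk
        rcases lt_or_gt_of_ne hk with h | h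
        · exact Or.inr h
        · exact Or.inl h
      · rintro (h | h) <;> [exact ne_of_gt h; exact ne_of_lt h]
    have hdisj : ∀ i : Fin N, Disjoint (Finset.Ioi i) (Finset.Iio i) := by
      intro i
      rw [Finset.disjoint_left]
      intro a ha hb
      exact absurd (Finset.mem_Iio.mp hb) (not_lt.mpr (le_of_lt (Finset.mem_Ioi.mp ha)))
    have hswap : ∑ i, ∑ k ∈ Finset.Iio i, g i k = ∑ j, ∑ i ∈ Finset.Ioi j, g i j := by
      refine Finset.sum_comm' ?_
      intro a b
      simp [Finset.mem_Iio, Finset.mem_Ioi]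
    calc ∑ i, ∑ k ∈ Finset.univ.erase i, g i k
        = ∑ i, (∑ k ∈ Finset.Ioi i, g i k + ∑ k ∈ Finset.Iio i, g i k) := by
          refine Finset.sum_congr rfl fun i _ => ?_
          rw [herase i, Finset.sum_union (hdisj i)]
    _ = ∑ i, ∑ k ∈ Finset.Ioi i, g i k + ∑ i, ∑ k ∈ Finset.Iio i, g i k := by
          rw [Finset.sum_add_distrib]
    _ = ∑ i, ∑ k ∈ Finset.Ioi i, g i k + ∑ i, ∑ j ∈ Finset.Ioi i, g j i := by
          rw [hswap]
    _ = ∑ i, ∑ j ∈ Finset.Ioi i, (g i j + g j i) := by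
          rw [← Finset.sum_add_distrib]
          refine Finset.sum_congr rfl fun i _ => ?_
          rw [← Finset.sum_add_distrib]
  -- per-pair identity
  have pair_id : ∀ i j, (1/2 : ℝ) * (g i j + g j i) = x i ⬝ᵥ x j + (1/2) * e i j := by
    intro i j
    have hgij : g i j = v i ⬝ᵥ (Q i * Q j) *ᵥ v i := rfl
    have hgji : g j i = v j ⬝ᵥ (Q i * Q j) *ᵥ v j := by
      show v j ⬝ᵥ (Q j * Q i) *ᵥ v j = v j ⬝ᵥ (Q i * Q j) *ᵥ v j
      rw [hcomm j i]
    have hba : v j ⬝ᵥ (Q i * Q j) *ᵥ v i = x i ⬝ᵥ x j := by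
      rw [symm_dot (hPsymm i j), dotProduct_comm, hcross i j]
    have hab : v i ⬝ᵥ (Q i * Q j) *ᵥ v j = x i ⬝ᵥ x j := (hcross i j).symm
    have hexp : e i j = (v i ⬝ᵥ (Q i * Q j) *ᵥ v i) + (v j ⬝ᵥ (Q i * Q j) *ᵥ v j)
        - (v i ⬝ᵥ (Q i * Q j) *ᵥ v j) - (v j ⬝ᵥ (Q i * Q j) *ᵥ v i) := by
      show (v i - v j) ⬝ᵥ (Q i * Q j) *ᵥ (v i - v j) = _
      simp only [Matrix.mulVec_sub, sub_dotProduct, dotProduct_sub]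
      ring
    rw [hgij, hgji, hexp, hab, hba, hcross i j]
    ring
  -- main decomposition
  have hmain : ∑ i, (1/2 : ℝ) * (x i ⬝ᵥ (M i) *ᵥ x i)
      = (∑ i, ∑ j ∈ Finset.Ioi i, x i ⬝ᵥ x j)
        + ∑ i, ∑ j ∈ Finset.Ioi i, (1/2 : ℝ) * e i j := by
    calc ∑ i, (1/2 : ℝ) * (x i ⬝ᵥ (M i) *ᵥ x i)
        = ∑ i, (1/2 : ℝ) * ∑ k ∈ Finset.univ.erase i, g i k := by
          refine Finset.sum_congr rfl fun i _ => by rw [hquad i]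
    _ = (1/2 : ℝ) * ∑ i, ∑ k ∈ Finset.univ.erase i, g i k := by
          rw [Finset.mul_sum]
    _ = (1/2 : ℝ) * ∑ i, ∑ j ∈ Finset.Ioi i, (g i j + g j i) := by rw [stepA]
    _ = ∑ i, ∑ j ∈ Finset.Ioi i, (1/2 : ℝ) * (g i j + g j i) := by
          rw [Finset.mul_sum]
          exact Finset.sum_congr rfl fun i _ => by rw [Finset.mul_sum]
    _ = ∑ i, ∑ j ∈ Finset.Ioi i, (x i ⬝ᵥ x j + (1/2 : ℝ) * e i j) := by
          exact Finset.sum_congr rfl fun i _ =>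
            Finset.sum_congr rfl fun j _ => pair_id i j
    _ = (∑ i, ∑ j ∈ Finset.Ioi i, x i ⬝ᵥ x j)
        + ∑ i, ∑ j ∈ Finset.Ioi i, (1/2 : ℝ) * e i j := by
          rw [← Finset.sum_add_distrib]
          exact Finset.sum_congr rfl fun i _ => by rw [← Finset.sum_add_distrib]
  have hkey : ∀ i j, 0 ≤ e i j ∧ (e i j = 0 → v i = v j) := by
    intro i j
    have := key_quad (hpos i) (hpos j) (hcomm i j) (v i - v j)
    exact ⟨this.1, fun h0 => sub_eq_zero.mp (this.2 h0)⟩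
  have hEnn : ∀ i : Fin N, ∀ j ∈ Finset.Ioi i, 0 ≤ (1/2 : ℝ) * e i j := by
    intro i j _
    have := (hkey i j).1
    linarith
  have hEsum_nn : 0 ≤ ∑ i, ∑ j ∈ Finset.Ioi i, (1/2 : ℝ) * e i j :=
    Finset.sum_nonneg fun i _ => Finset.sum_nonneg (hEnn i)
  constructor
  · rw [hmain]; linarith
  constructor
  · intro heq
    have hE0 : ∑ i, ∑ j ∈ Finset.Ioi i, (1/2 : ℝ) * e i j = 0 := by
      rw [hmain] at heq; linarith
    have hterm : ∀ i : Fin N, ∀ j ∈ Finset.Ioi i, (1/2 : ℝ) * e i j = 0 := by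
      have h1 := (Finset.sum_eq_zero_iff_of_nonneg
        (fun i _ => Finset.sum_nonneg (hEnn i))).mp hE0
      intro i j hj
      exact (Finset.sum_eq_zero_iff_of_nonneg (hEnn i)).mp (h1 i (Finset.mem_univ i)) j hj
    have hveq : ∀ i j : Fin N, i < j → v i = v j := by
      intro i j hij
      have := hterm i j (Finset.mem_Ioi.mpr hij)
      exact (hkey i j).2 (by linarith)
    set i0 : Fin N := ⟨0, hNpos⟩ with hi0
    refine ⟨v i0, fun i => ?_⟩
    rcases eq_or_ne i i0 with h | h
    · rw [h, ← hx i0]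
    · have hlt : i0 < i := by
        have hle : i0 ≤ i := by
          simp only [Fin.le_def, hi0]
          exact Nat.zero_le _
        exact lt_of_le_of_ne hle (Ne.symm h)
      rw [hx i, hveq i0 i hlt]
  · rintro ⟨w, hw⟩
    have hvw : ∀ i, v i = w := by
      intro i
      rw [hv]
      simp only [hw i, Matrix.mulVec_mulVec, hinv' i, Matrix.one_mulVec]
    have hE0 : ∑ i, ∑ j ∈ Finset.Ioi i, (1/2 : ℝ) * e i j = 0 := by
      refine Finset.sum_eq_zero fun i _ => Finset.sum_eq_zero fun j _ => ?_
      rw [he]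
      simp [hvw i, hvw j]
    rw [hmain, hE0, add_zero]
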